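/- For any multiset {t_1,...,t_n} of standard normalized ground terms, zap(nf(t_1 ⊕ ... ⊕ t_n)) = nf(zap(t_1) ⊕ ... ⊕ zap(t_n)). -/

import Mathlib

/- A formalization of the Dolev-Yao intruder model with XOR, following
"Protocol insecurity with finitely many sessions and XOR".
Multisets of terms (for the XOR operator) are represented by lists;
the normal form of an XOR term is represented canonically by sorting the
(normalized) factors in a fixed linear order (via an injective encoding of
terms into ℕ) and cancelling pairs of equal factors (nilpotence). -/

namespace DYXor

/-- Terms: variables, names (with the distinguished names `0` and `secret`,
and keys among the names), public keys, pairs, symmetric and asymmetric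
encryptions, and XORs of (multi)sets of terms. -/
inductive Term : Type where
  | var : ℕ → Term
  | name : ℕ → Term
  | pk : Term → Term
  | pair : Term → Term → Term
  | senc : Term → Term → Term
  | aenc : Term → Term → Term
  | xor : List Term → Term

/-- The distinguished name `0`, the unit of XOR. -/
def Term.zero : Term := .name 0

/-- The distinguished name `secret`. -/
def Term.secret : Term := .name 1

/-- A term is standard if it is not an XOR term. -/
def Term.IsStandard : Term → Prop
  | .xor _ => False
  | _ => True

/-- The factors of a term, as a list (representing a multiset):
`fac(t) = {t}` for standard `t`, and the multiset union of the factors of the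
members for an XOR term. -/
def facL : Term → List Term
  | .var x => [.var x]
  | .name a => [.name a]
  | .pk u => [.pk u]
  | .pair u v => [.pair u v]
  | .senc u v => [.senc u v]
  | .aenc u v => [.aenc u v]
  | .xor M => M.attach.flatMap fun u => facL u.1
decreasing_by
  have := List.sizeOf_lt_of_mem u.2
  simp only [Term.xor.sizeOf_spec]
  omega

/-- An injective encoding of terms into ℕ, fixing a canonical linear order on
terms. -/
def encode : Term → ℕ
  | .var x => Nat.pair 0 x + 1
  | .name a => Nat.pair 1 a + 1
  | .pk u => Nat.pair 2 (encode u) + 1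
  | .pair u v => Nat.pair 3 (Nat.pair (encode u) (encode v)) + 1
  | .senc u v => Nat.pair 4 (Nat.pair (encode u) (encode v)) + 1
  | .aenc u v => Nat.pair 5 (Nat.pair (encode u) (encode v)) + 1
  | .xor M => Nat.pair 6 ((M.attach.map fun u => encode u.1).foldr (fun a b => Nat.pair a b + 1) 0) + 1
decreasing_by
  all_goals first
  | (have := List.sizeOf_lt_of_mem u.2; simp only [Term.xor.sizeOf_spec]; omega)
  | (simp only [Term.pk.sizeOf_spec, Term.pair.sizeOf_spec, Term.senc.sizeOf_spec,
      Term.aenc.sizeOf_spec]; omega)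

/-- Sort a list of terms in the canonical order. -/
def sortT (l : List Term) : List Term :=
  l.mergeSort fun a b => Nat.ble (encode a) (encode b)

/-- On a (sorted) list, remove pairs of equal adjacent elements, keeping
exactly the elements that occur an odd number of times (nilpotence of ⊕). -/
def cancel : List Term → List Term
  | [] => []
  | [a] => [a]
  | a :: b :: rest =>
      if encode a = encode b then cancel rest else a :: cancel (b :: rest)

/-- `xorOf B` is the term `⊕B`, with the conventions `⊕∅ := 0` and `⊕{t} := t`. -/
def xorOf : List Term → Term
  | [] => Term.zero
  | [t] => t
  | l => .xor l

theorem sizeOf_le_of_mem_facL : ∀ (t : Term), ∀ u ∈ facL t, sizeOf u ≤ sizeOf t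
  | .xor M => by
    intro u hu
    rw [facL] at hu
    simp only [List.mem_flatMap, List.mem_attach, true_and] at hu
    obtain ⟨⟨m, hm⟩, hu⟩ := hu
    have h1 : sizeOf u ≤ sizeOf m := sizeOf_le_of_mem_facL m u hu
    have h2 := List.sizeOf_lt_of_mem hm
    simp only [Term.xor.sizeOf_spec]
    omega
  | .var x => by intro u hu; rw [facL] at hu; simp at hu; simp [hu]
  | .name a => by intro u hu; rw [facL] at hu; simp at hu; simp [hu]
  | .pk v => by intro u hu; rw [facL] at hu; simp at hu; simp [hu]
  | .pair v w => by intro u hu; rw [facL] at hu; simp at hu; simp [hu]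
  | .senc v w => by intro u hu; rw [facL] at hu; simp at hu; simp [hu]
  | .aenc v w => by intro u hu; rw [facL] at hu; simp at hu; simp [hu]
decreasing_by
  all_goals (have := List.sizeOf_lt_of_mem hm; simp only [Term.xor.sizeOf_spec]; omega)

theorem sizeOf_lt_of_mem_facL_xor (M : List Term) :
    ∀ u ∈ facL (.xor M), sizeOf u < sizeOf (Term.xor M) := by
  intro u hu
  rw [facL] at hu
  simp only [List.mem_flatMap, List.mem_attach, true_and] at hu
  obtain ⟨⟨m, hm⟩, hu⟩ := hu
  have h1 := sizeOf_le_of_mem_facL m u hu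
  have h2 := List.sizeOf_lt_of_mem hm
  simp only [Term.xor.sizeOf_spec]
  omega

/-- The normal form `nf(t)` of a term, implementing associativity,
commutativity, the unit `0` and nilpotence of ⊕: the normal form of an XOR
term `r` is the XOR of the *set* of those terms `v` such that the number of
factors `u ∈ fac(r)` with `nf(u) = v` is odd (represented canonically as a
sorted list). -/
def nf : Term → Term
  | .var x => .var x
  | .name a => .name a
  | .pk u => .pk (nf u)
  | .pair u v => .pair (nf u) (nf v)
  | .senc u v => .senc (nf u) (nf v)
  | .aenc u v => .aenc (nf u) (nf v)
  | .xor M => xorOf (cancel (sortT ((facL (.xor M)).attach.map fun u => nf u.1)))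
decreasing_by
  all_goals first
  | (exact sizeOf_lt_of_mem_facL_xor M u.1 u.2)
  | (simp only [Term.pk.sizeOf_spec, Term.pair.sizeOf_spec, Term.senc.sizeOf_spec,
      Term.aenc.sizeOf_spec]; omega)

/-- A term is normalized if it equals its normal form. -/
def Term.Normalized (t : Term) : Prop := nf t = t

/-- Application of a substitution (a map from variables to terms, the identity
outside its domain), extended homomorphically to all terms. -/
def subst (σ : ℕ → Term) : Term → Term
  | .var x => σ x
  | .name a => .name a
  | .pk u => .pk (subst σ u)
  | .pair u v => .pair (subst σ u) (subst σ v)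
  | .senc u v => .senc (subst σ u) (subst σ v)
  | .aenc u v => .aenc (subst σ u) (subst σ v)
  | .xor M => .xor (M.attach.map fun u => subst σ u.1)
decreasing_by
  all_goals first
  | (have := List.sizeOf_lt_of_mem u.2; simp only [Term.xor.sizeOf_spec]; omega)
  | (simp only [Term.pk.sizeOf_spec, Term.pair.sizeOf_spec, Term.senc.sizeOf_spec,
      Term.aenc.sizeOf_spec]; omega)

/-- `IsFactor u t`: `u` occurs in the multiset `fac(t)` of factors of `t`. -/
inductive IsFactor : Term → Term → Prop where
  | std {t : Term} : t.IsStandard → IsFactor t t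
  | xor {t u : Term} {M : List Term} : u ∈ M → IsFactor t u → IsFactor t (.xor M)

/-- The subterm relation: `Subterm u t` iff `u ∈ st(t)`. -/
inductive Subterm : Term → Term → Prop where
  | refl (t : Term) : Subterm t t
  | pk {s u : Term} : Subterm s u → Subterm s (.pk u)
  | pair_l {s u v : Term} : Subterm s u → Subterm s (.pair u v)
  | pair_r {s u v : Term} : Subterm s v → Subterm s (.pair u v)
  | senc_l {s u v : Term} : Subterm s u → Subterm s (.senc u v)
  | senc_r {s u v : Term} : Subterm s v → Subterm s (.senc u v)
  | aenc_l {s u v : Term} : Subterm s u → Subterm s (.aenc u v)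
  | aenc_r {s u v : Term} : Subterm s v → Subterm s (.aenc u v)
  | xor {s u : Term} {M : List Term} :
      IsFactor u (.xor M) → Subterm s u → Subterm s (.xor M)

/-- `st(t)` as a set of terms. -/
def stT (t : Term) : Set Term := {u | Subterm u t}

/-- `st(X)` for a set of terms `X`. -/
def stSet (X : Set Term) : Set Term := {u | ∃ t ∈ X, Subterm u t}

/-- The variables occurring in a term. -/
def varsT (t : Term) : Set ℕ := {x | Subterm (.var x) t}

/-- A term is ground if no variable occurs in it. -/
def Ground (t : Term) : Prop := ∀ x : ℕ, ¬ Subterm (.var x) t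

/-- The rules of the Dolev-Yao derivation system. -/
inductive Rule : Type where
  | ax | split1 | split2 | sdec | adec | pkR | pairR | sencR | aencR | xorR
  deriving DecidableEq

/-- Proof trees: each node carries a term (its conclusion) and a rule. -/
inductive PTree : Type where
  | node : Term → Rule → List PTree → PTree

/-- The conclusion of a proof: the term at its root. -/
def PTree.conc : PTree → Term
  | .node t _ _ => t

/-- The last rule of a proof: the rule at its root. -/
def PTree.rule : PTree → Rule
  | .node _ r _ => r

/-- `IsProof X π` says that `π` is a derivation (proof) of `X ⊢ conc(π)`:
every node is labelled by a normalized term and is a correct instance of a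
Dolev-Yao rule, and `ax`-leaves are labelled by terms of `X`. -/
inductive IsProof (X : Set Term) : PTree → Prop where
  | ax {t : Term} : t ∈ X → nf t = t → IsProof X (.node t .ax [])
  | split1 {t u : Term} {δ : PTree} :
      IsProof X δ → δ.conc = .pair t u → IsProof X (.node t .split1 [δ])
  | split2 {t u : Term} {δ : PTree} :
      IsProof X δ → δ.conc = .pair t u → IsProof X (.node u .split2 [δ])
  | sdec {t v : Term} {δ₁ δ₂ : PTree} :
      IsProof X δ₁ → IsProof X δ₂ → δ₁.conc = .senc t v → δ₂.conc = v →
      IsProof X (.node t .sdec [δ₁, δ₂])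
  | adec {t : Term} {k : ℕ} {δ₁ δ₂ : PTree} :
      IsProof X δ₁ → IsProof X δ₂ → δ₁.conc = .aenc t (.pk (.name k)) →
      δ₂.conc = .name k → IsProof X (.node t .adec [δ₁, δ₂])
  | pkR {k : ℕ} {δ : PTree} :
      IsProof X δ → δ.conc = .name k → IsProof X (.node (.pk (.name k)) .pkR [δ])
  | pairR {δ₁ δ₂ : PTree} :
      IsProof X δ₁ → IsProof X δ₂ →
      IsProof X (.node (.pair δ₁.conc δ₂.conc) .pairR [δ₁, δ₂])
  | sencR {δ₁ δ₂ : PTree} :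
      IsProof X δ₁ → IsProof X δ₂ →
      IsProof X (.node (.senc δ₁.conc δ₂.conc) .sencR [δ₁, δ₂])
  | aencR {k : ℕ} {δ₁ δ₂ : PTree} :
      IsProof X δ₁ → IsProof X δ₂ → δ₂.conc = .pk (.name k) →
      IsProof X (.node (.aenc δ₁.conc (.pk (.name k))) .aencR [δ₁, δ₂])
  | xorR {l : List PTree} :
      (∀ δ ∈ l, IsProof X δ) →
      IsProof X (.node (nf (.xor (l.map PTree.conc))) .xorR l)

/-- `X ⊢_dy t`: there is a proof of `X ⊢ t`. -/
def Derives (X : Set Term) (t : Term) : Prop :=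
  ∃ π : PTree, IsProof X π ∧ π.conc = t

/-- The subproof (subtree) relation on proof trees. -/
inductive Subproof : PTree → PTree → Prop where
  | refl (π : PTree) : Subproof π π
  | child {π δ : PTree} {t : Term} {r : Rule} {l : List PTree} :
      δ ∈ l → Subproof π δ → Subproof π (.node t r l)

/-- `terms(π)`: the set of terms labelling the nodes of `π`. -/
def termsOf (π : PTree) : Set Term := {u | ∃ δ : PTree, Subproof δ π ∧ δ.conc = u}

/-- `axioms(π)`: the set of terms labelling the `ax`-leaves of `π`. -/
def axiomsOf (π : PTree) : Set Term :=
  {u | ∃ δ : PTree, Subproof δ π ∧ δ.rule = .ax ∧ δ.conc = u}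

/-- The constructor rules `pk`, `pair`, `senc`, `aenc`. -/
def Rule.IsConstructor (r : Rule) : Prop :=
  r = .pkR ∨ r = .pairR ∨ r = .sencR ∨ r = .aencR

/-- The destructor rules `split`, `sdec`, `adec` (excluding `xor_d`). -/
def Rule.IsBasicDestructor (r : Rule) : Prop :=
  r = .split1 ∨ r = .split2 ∨ r = .sdec ∨ r = .adec

/-- A proof ends in a destructor if its last rule is `split`/`sdec`/`adec`,
or is an `xor` with standard conclusion (`xor_d`). -/
def PTree.EndsInDestructor (π : PTree) : Prop :=
  π.rule.IsBasicDestructor ∨ (π.rule = .xorR ∧ π.conc.IsStandard)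

/-- Normal proofs: (1) no occurrence of `split`/`sdec`/`adec` has its leftmost
(major) premise derived by a constructor rule; (2) in every occurrence of the
`xor` rule, no two premises are equal, no premise equals the conclusion, and no
premise is derived by an `xor` rule. -/
inductive Normal : PTree → Prop where
  | mk {t : Term} {r : Rule} {l : List PTree} :
      (∀ δ ∈ l, Normal δ) →
      (r.IsBasicDestructor → ∀ δ₁ ∈ l.head?, ¬ δ₁.rule.IsConstructor) →
      (r = .xorR →
        (l.map PTree.conc).Nodup ∧ (∀ δ ∈ l, δ.conc ≠ t) ∧ (∀ δ ∈ l, δ.rule ≠ .xorR)) →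
      Normal (.node t r l)

/-- `RuleStep Y u`: `u` is the conclusion of a rule instance all of whose
premises lie in `Y`. -/
inductive RuleStep (Y : Set Term) : Term → Prop where
  | split1 {t u : Term} : Term.pair t u ∈ Y → RuleStep Y t
  | split2 {t u : Term} : Term.pair t u ∈ Y → RuleStep Y u
  | sdec {t v : Term} : Term.senc t v ∈ Y → v ∈ Y → RuleStep Y t
  | adec {t : Term} {k : ℕ} : Term.aenc t (.pk (.name k)) ∈ Y → Term.name k ∈ Y → RuleStep Y t
  | pkR {k : ℕ} : Term.name k ∈ Y → RuleStep Y (.pk (.name k))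
  | pairR {u v : Term} : u ∈ Y → v ∈ Y → RuleStep Y (.pair u v)
  | sencR {u v : Term} : u ∈ Y → v ∈ Y → RuleStep Y (.senc u v)
  | aencR {u : Term} {k : ℕ} : u ∈ Y → Term.pk (.name k) ∈ Y → RuleStep Y (.aenc u (.pk (.name k)))
  | xorR {l : List Term} : (∀ s ∈ l, s ∈ Y) → RuleStep Y (nf (.xor l))

/-- `one-step(Y)` relative to the ambient set `st`. -/
def oneStep (st : Set Term) (Y : Set Term) : Set Term :=
  Y ∪ {u ∈ st | RuleStep Y u}

/-- Relabel every node of a proof tree by applying `g` to its term. -/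
def mapTree (g : Term → Term) : PTree → PTree
  | .node t r l => .node (g t) r (l.attach.map fun d => mapTree g d.1)
decreasing_by
  have := List.sizeOf_lt_of_mem d.2
  simp only [PTree.node.sizeOf_spec]
  omega

attribute [local instance] Classical.propDecidable

/-- `zap` relative to a set `T` of terms (to be instantiated with `nf(Dσ)`):
`zap(a) = a` for atomic `a`; `zap(t) = 0` for zappable `t` (a non-atomic
standard term with `nf(t) ∉ T`); otherwise `zap` is applied to the arguments
and the result is normalized. -/
noncomputable def zap (T : Set Term) : Term → Term
  | .var x => .var x
  | .name a => .name a
  | .pk u => if nf (.pk u) ∈ T then nf (.pk (zap T u)) else Term.zero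
  | .pair u v => if nf (.pair u v) ∈ T then nf (.pair (zap T u) (zap T v)) else Term.zero
  | .senc u v => if nf (.senc u v) ∈ T then nf (.senc (zap T u) (zap T v)) else Term.zero
  | .aenc u v => if nf (.aenc u v) ∈ T then nf (.aenc (zap T u) (zap T v)) else Term.zero
  | .xor M => nf (.xor (M.attach.map fun u => zap T u.1))
decreasing_by
  all_goals first
  | (have := List.sizeOf_lt_of_mem u.2; simp only [Term.xor.sizeOf_spec]; omega)
  | (simp only [Term.pk.sizeOf_spec, Term.pair.sizeOf_spec, Term.senc.sizeOf_spec,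
      Term.aenc.sizeOf_spec]; omega)

/-- A proof is typed if each of its subproofs either ends in a constructor
rule, or has a typed conclusion (a member of `T = nf(Dσ)`), or has a
non-standard conclusion. -/
def TypedProof (T : Set Term) (π : PTree) : Prop :=
  ∀ δ : PTree, Subproof δ π → δ.rule.IsConstructor ∨ δ.conc ∈ T ∨ ¬ δ.conc.IsStandard

/-- A role: initial knowledge together with a sequence of (receive, send) pairs. -/
structure Role : Type where
  know : Set Term
  seq : List (Term × Term)

/-- The variables of a list of (receive, send) pairs. -/
def varsRS (ρ : List (Term × Term)) : Set ℕ :=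
  {x | ∃ p ∈ ρ, Subterm (.var x) p.1 ∨ Subterm (.var x) p.2}

/-- The agent variables of a role sequence: the variables that first occur in
a send, i.e. `⋃_i (vars(s_i) \ vars({r_1, …, r_i}))`. -/
def varsA (ρ : List (Term × Term)) : Set ℕ :=
  {x | ∃ i : Fin ρ.length, Subterm (.var x) (ρ.get i).2 ∧
        ∀ j : Fin ρ.length, j.1 ≤ i.1 → ¬ Subterm (.var x) (ρ.get j).1}

/-- The intruder variables of a role sequence. -/
def varsI (ρ : List (Term × Term)) : Set ℕ := varsRS ρ \ varsA ρ

/-- Well-formed roles: the initial knowledge is a finite set of standard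
normalized terms whose variables are agent variables, and every send is
derivable from the initial knowledge together with the receives up to that
point. -/
def Role.WF (R : Role) : Prop :=
  R.know.Finite ∧
  (∀ t ∈ R.know, t.IsStandard ∧ nf t = t) ∧
  (∀ t ∈ R.know, ∀ x : ℕ, Subterm (.var x) t → x ∈ varsA R.seq) ∧
  ∀ i : Fin R.seq.length,
    Derives (R.know ∪ {u | ∃ j : Fin R.seq.length, j.1 ≤ i.1 ∧ u = (R.seq.get j).1})
      (R.seq.get i).2

/-- A protocol: the intruder's initial knowledge and a finite list of roles. -/
structure Protocol : Type where
  init : Set Term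
  roles : List Role

/-- Well-formed protocols: the initial knowledge is a finite set of normalized
ground terms, and all roles are well-formed. -/
def Protocol.WF (P : Protocol) : Prop :=
  P.init.Finite ∧ (∀ t ∈ P.init, nf t = t ∧ Ground t) ∧ ∀ R ∈ P.roles, R.WF

/-- The instantiation `ρτ` of a role sequence by a substitution. -/
def instSeq (R : Role) (τ : ℕ → Term) : List (Term × Term) :=
  R.seq.map fun p => (subst τ p.1, subst τ p.2)

/-- A session of a protocol: a role together with a substitution sending agent
variables to names and intruder variables to variables, with the instantiated
sequence consisting of normalized terms. -/
def IsSession (P : Protocol) (R : Role) (τ : ℕ → Term) : Prop :=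
  R ∈ P.roles ∧
  (∀ x ∈ varsA R.seq, ∃ a : ℕ, τ x = .name a) ∧
  (∀ x ∈ varsI R.seq, ∃ y : ℕ, τ x = .var y) ∧
  (∀ p ∈ instSeq R τ, nf p.1 = p.1 ∧ nf p.2 = p.2)

/-- Two sessions are coherent if their instantiated sequences share no variables. -/
def Coherent (s₁ s₂ : Role × (ℕ → Term)) : Prop :=
  ∀ x : ℕ, ¬ (x ∈ varsRS (instSeq s₁.1 s₁.2) ∧ x ∈ varsRS (instSeq s₂.1 s₂.2))

/-- `Interleave ls l`: `l` is an interleaving of the lists in `ls`. -/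
inductive Interleave {α : Type} : List (List α) → List α → Prop where
  | nil {ls : List (List α)} : (∀ l ∈ ls, l = []) → Interleave ls []
  | cons {ls : List (List α)} {i : Fin ls.length} {x : α} {xs ys : List α} :
      ls.get i = x :: xs → Interleave (ls.set i xs) ys → Interleave ls (x :: ys)

/-- The set `X_i` of a run: the initial knowledge `X₀` together with the first
`i` sent messages of `ξ`. -/
def runKnow (P : Protocol) (ξ : List (Term × Term)) (i : ℕ) : Set Term :=
  P.init ∪ {u | ∃ j : Fin ξ.length, j.1 < i ∧ u = (ξ.get j).2}

/-- `nf(Xσ) = {nf(tσ) : t ∈ X}`. -/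
def nfSubst (σ : ℕ → Term) (X : Set Term) : Set Term :=
  {u | ∃ t ∈ X, u = nf (subst σ t)}

/-- `(ξ, σ)` is a run generated by the pairwise coherent sessions `S` of `P`:
`ξ` is a prefix of an interleaving of the instantiated role sequences, `σ` is
a normalized ground substitution with domain `vars(ξ)`, and each received
message is derivable (after substitution and normalization) from the initial
knowledge together with the previously sent messages. -/
def IsRun (P : Protocol) (S : List (Role × (ℕ → Term)))
    (ξ : List (Term × Term)) (σ : ℕ → Term) : Prop :=
  (∀ s ∈ S, IsSession P s.1 s.2) ∧
  S.Pairwise Coherent ∧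
  (∃ full : List (Term × Term),
      Interleave (S.map fun s => instSeq s.1 s.2) full ∧ ξ.IsPrefix full) ∧
  (∀ x ∈ varsRS ξ, Ground (σ x) ∧ nf (σ x) = σ x) ∧
  (∀ x : ℕ, x ∉ varsRS ξ → σ x = .var x) ∧
  ∀ j : Fin ξ.length,
    Derives (nfSubst σ (runKnow P ξ j.1)) (nf (subst σ (ξ.get j).1))

/-- The set `C` associated with a run: all subterms of the initial knowledge,
the instantiated role knowledges, the messages of the run, and `secret`. -/
def Cset (P : Protocol) (S : List (Role × (ℕ → Term)))
    (ξ : List (Term × Term)) : Set Term :=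
  stSet (P.init ∪ {u | ∃ s ∈ S, ∃ t ∈ s.1.know, u = subst s.2 t} ∪
    {u | ∃ p ∈ ξ, u = p.1 ∨ u = p.2} ∪ {Term.secret})

/-- The set `D ⊆ C` of standard non-variable members of `C`. -/
def Dset (P : Protocol) (S : List (Role × (ℕ → Term)))
    (ξ : List (Term × Term)) : Set Term :=
  {t ∈ Cset P S ξ | t.IsStandard ∧ ∀ x : ℕ, t ≠ .var x}

/-- `nf(Dσ)`: a standard normalized term is *typed* iff it belongs to this set. -/
def TypedSet (P : Protocol) (S : List (Role × (ℕ → Term)))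
    (ξ : List (Term × Term)) (σ : ℕ → Term) : Set Term :=
  nfSubst σ (Dset P S ξ)

/-- `(ξ, σ)` is an attack: a run after which the intruder derives `secret`. -/
def IsAttack (P : Protocol) (S : List (Role × (ℕ → Term)))
    (ξ : List (Term × Term)) (σ : ℕ → Term) : Prop :=
  IsRun P S ξ σ ∧ Derives (nfSubst σ (runKnow P ξ ξ.length)) Term.secret

/-- `P` has a `K`-bounded attack. -/
def HasBoundedAttack (K : ℕ) (P : Protocol) : Prop :=
  ∃ (S : List (Role × (ℕ → Term))) (ξ : List (Term × Term)) (σ : ℕ → Term),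
    S.length = K ∧ IsAttack P S ξ σ

/-! ### Auxiliary lemmas -/

theorem listEnc_inj : ∀ {l₁ l₂ : List ℕ},
    l₁.foldr (fun a b => Nat.pair a b + 1) 0 = l₂.foldr (fun a b => Nat.pair a b + 1) 0 →
    l₁ = l₂
  | [], [], _ => rfl
  | [], _ :: _, h => by simp at h
  | _ :: _, [], h => by simp at h
  | a :: l₁, b :: l₂, h => by
    simp only [List.foldr_cons, Nat.add_left_inj, Nat.pair_eq_pair] at h
    rw [h.1, listEnc_inj h.2]

theorem map_encode_inj : ∀ (M N : List Term),
    (∀ u ∈ M, ∀ t : Term, encode u = encode t → u = t) →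
    M.map encode = N.map encode → M = N
  | [], [], _, _ => rfl
  | [], _ :: _, _, h => by simp at h
  | _ :: _, [], _, h => by simp at h
  | a :: M, b :: N, hinj, h => by
    simp only [List.map_cons, List.cons.injEq] at h
    rw [hinj a (by simp) b h.1,
      map_encode_inj M N (fun u hu => hinj u (by simp [hu])) h.2]

theorem encode_inj : ∀ (s t : Term), encode s = encode t → s = t := by
  intro s
  induction s using Term.rec
    (motive_2 := fun M => ∀ u ∈ M, ∀ t : Term, encode u = encode t → u = t) with
  | var x => intro t h; cases t <;> simp_all [encode, Nat.pair_eq_pair]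
  | name a => intro t h; cases t <;> simp_all [encode, Nat.pair_eq_pair]
  | pk u ih =>
    intro t h; cases t <;> simp only [encode, Nat.add_left_inj, Nat.pair_eq_pair] at h <;>
      first
      | omega
      | (obtain ⟨-, h⟩ := h; rw [ih _ h])
  | pair u v ihu ihv =>
    intro t h; cases t <;> simp only [encode, Nat.add_left_inj, Nat.pair_eq_pair] at h <;>
      first
      | omega
      | (rw [ihu _ h.2.1, ihv _ h.2.2])
  | senc u v ihu ihv =>
    intro t h; cases t <;> simp only [encode, Nat.add_left_inj, Nat.pair_eq_pair] at h <;>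
      first
      | omega
      | (rw [ihu _ h.2.1, ihv _ h.2.2])
  | aenc u v ihu ihv =>
    intro t h; cases t <;> simp only [encode, Nat.add_left_inj, Nat.pair_eq_pair] at h <;>
      first
      | omega
      | (rw [ihu _ h.2.1, ihv _ h.2.2])
  | xor M ih =>
    intro t h; cases t with
    | xor N =>
      simp only [encode, Nat.add_left_inj, Nat.pair_eq_pair, List.attach_map_val] at h
      obtain ⟨-, h⟩ := h
      rw [map_encode_inj M N ih (listEnc_inj h)]
    | _ => simp only [encode, Nat.add_left_inj, Nat.pair_eq_pair] at h <;> omega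
  | nil => rename_i u hu t h; simp at hu
  | cons a M iha ihM =>
    rename_i u hu t h
    rcases List.mem_cons.1 hu with rfl | hu
    · exact iha t h
    · exact ihM u hu t h

/-- The canonical order on terms, as a `Prop`. -/
def leT (a b : Term) : Prop := encode a ≤ encode b

theorem sortT_perm (l : List Term) : (sortT l).Perm l := List.mergeSort_perm l _

theorem sortT_sorted (l : List Term) : (sortT l).Pairwise leT := by
  have h := List.pairwise_mergeSort
    (le := fun a b : Term => Nat.ble (encode a) (encode b))
    (fun a b c hab hbc => by
      simp only [Nat.ble_eq] at *; omega)
    (fun a b => by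
      simp only [Bool.or_eq_true, Nat.ble_eq]; omega) l
  exact h.imp (fun hab => by simpa [leT, Nat.ble_eq] using hab)

theorem sortT_of_sorted {l : List Term} (h : l.Pairwise leT) : sortT l = l :=
  List.mergeSort_of_pairwise (h.imp fun hab => by simpa [leT, Nat.ble_eq] using hab)

theorem cancel_sublist : ∀ l : List Term, (cancel l).Sublist l
  | [] => by rw [cancel]
  | [a] => by rw [cancel]
  | a :: b :: rest => by
    rw [cancel]
    split
    · exact (cancel_sublist rest).trans
        ((List.sublist_cons_self b rest).trans (List.sublist_cons_self a _))
    · exact (cancel_sublist (b :: rest)).cons₂ a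

theorem cancel_multiset : ∀ l : List Term, ∃ q : List Term,
    (l : Multiset Term) = (↑(cancel l) : Multiset Term) + ↑q + ↑q
  | [] => ⟨[], by simp [cancel]⟩
  | [a] => ⟨[], by simp [cancel]⟩
  | a :: b :: rest => by
    rw [cancel]
    split
    · next h =>
      obtain ⟨q, hq⟩ := cancel_multiset rest
      obtain rfl : a = b := encode_inj a b h
      refine ⟨a :: q, ?_⟩
      simp only [← Multiset.cons_coe, hq, Multiset.cons_add, Multiset.add_cons]
    · next h =>
      obtain ⟨q, hq⟩ := cancel_multiset (b :: rest)
      refine ⟨q, ?_⟩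
      simp only [← Multiset.cons_coe, hq, Multiset.cons_add, Multiset.add_cons]

theorem not_mem_of_sorted_ne {a b : Term} {rest : List Term}
    (hs : (a :: b :: rest).Pairwise leT) (hne : encode a ≠ encode b) :
    a ∉ b :: rest := by
  intro hmem
  rcases List.mem_cons.1 hmem with rfl | hmem
  · exact hne rfl
  · have h1 : leT a b := (List.pairwise_cons.1 hs).1 b (by simp)
    have h2 : leT b a := (List.pairwise_cons.1 (List.pairwise_cons.1 hs).2).1 a hmem
    exact hne (le_antisymm h1 h2)

theorem nodup_cancel : ∀ {l : List Term}, l.Pairwise leT → (cancel l).Nodup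
  | [], _ => by rw [cancel]; exact List.nodup_nil
  | [a], _ => by rw [cancel]; simp
  | a :: b :: rest, hs => by
    rw [cancel]
    split
    · exact nodup_cancel (hs.sublist
        ((List.sublist_cons_self b rest).trans (List.sublist_cons_self a _)))
    · next h =>
      refine List.Nodup.cons ?_ (nodup_cancel (hs.sublist (List.sublist_cons_self a _)))
      intro hmem
      exact not_mem_of_sorted_ne hs h ((cancel_sublist (b :: rest)).mem hmem)

theorem cancel_eq_self : ∀ {l : List Term}, l.Pairwise leT → l.Nodup → cancel l = l
  | [], _, _ => by rw [cancel]
  | [a], _, _ => by rw [cancel]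
  | a :: b :: rest, hs, hn => by
    rw [cancel, if_neg, cancel_eq_self (hs.sublist (List.sublist_cons_self a _))
      (hn.sublist (List.sublist_cons_self a _))]
    intro h
    obtain rfl : a = b := encode_inj a b h
    exact (List.nodup_cons.1 hn).1 (by simp)

theorem isStandard_of_mem_facL : ∀ (t : Term), ∀ u ∈ facL t, u.IsStandard
  | .xor M => by
    intro u hu
    rw [facL] at hu
    simp only [List.mem_flatMap, List.mem_attach, true_and] at hu
    obtain ⟨⟨m, hm⟩, hu⟩ := hu
    exact isStandard_of_mem_facL m u hu
  | .var x => by intro u hu; rw [facL] at hu; simp at hu; simp [hu, Term.IsStandard]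
  | .name a => by intro u hu; rw [facL] at hu; simp at hu; simp [hu, Term.IsStandard]
  | .pk v => by intro u hu; rw [facL] at hu; simp at hu; simp [hu, Term.IsStandard]
  | .pair v w => by intro u hu; rw [facL] at hu; simp at hu; simp [hu, Term.IsStandard]
  | .senc v w => by intro u hu; rw [facL] at hu; simp at hu; simp [hu, Term.IsStandard]
  | .aenc v w => by intro u hu; rw [facL] at hu; simp at hu; simp [hu, Term.IsStandard]
decreasing_by
  all_goals (have := List.sizeOf_lt_of_mem hm; simp only [Term.xor.sizeOf_spec]; omega)

theorem facL_eq_of_standard : ∀ {t : Term}, t.IsStandard → facL t = [t]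
  | .var x, _ => by rw [facL]
  | .name a, _ => by rw [facL]
  | .pk u, _ => by rw [facL]
  | .pair u v, _ => by rw [facL]
  | .senc u v, _ => by rw [facL]
  | .aenc u v, _ => by rw [facL]
  | .xor M, h => h.elim

theorem flatMap_facL_eq {l : List Term} (h : ∀ u ∈ l, u.IsStandard) :
    l.flatMap facL = l := by
  induction l with
  | nil => rfl
  | cons a l ih =>
    rw [List.flatMap_cons, facL_eq_of_standard (h a (by simp)),
      ih (fun u hu => h u (by simp [hu]))]
    rfl

theorem facL_xor_eq {l : List Term} (h : ∀ u ∈ l, u.IsStandard) :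
    facL (.xor l) = l := by
  rw [facL,
    show (l.attach.flatMap fun u => facL u.1) = l.flatMap facL by simp [List.flatMap_def],
    flatMap_facL_eq h]

/-- The normal form of the XOR of a list, as a function of the list. -/
def nfX (l : List Term) : Term := xorOf (cancel (sortT l))

theorem nf_xor (M : List Term) : nf (.xor M) = nfX ((facL (.xor M)).map nf) := by
  rw [nf, nfX, List.attach_map_val]

theorem nf_xor_eq {l : List Term} (h1 : ∀ u ∈ l, u.IsStandard)
    (h2 : ∀ u ∈ l, nf u = u) : nf (.xor l) = nfX l := by
  rw [nf_xor, facL_xor_eq h1, (List.map_congr_left h2).trans (List.map_id l)]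

theorem nf_isStandard : ∀ {t : Term}, t.IsStandard → (nf t).IsStandard
  | .var x, _ => by rw [nf]; trivial
  | .name a, _ => by rw [nf]; trivial
  | .pk u, _ => by rw [nf]; trivial
  | .pair u v, _ => by rw [nf]; trivial
  | .senc u v, _ => by rw [nf]; trivial
  | .aenc u v, _ => by rw [nf]; trivial
  | .xor M, h => h.elim

theorem mem_of_mem_cancel_sortT {a : Term} {l : List Term}
    (h : a ∈ cancel (sortT l)) : a ∈ l :=
  (sortT_perm l).mem_iff.1 ((cancel_sublist _).mem h)

theorem nf_xorOf : ∀ {c : List Term}, c.Pairwise leT → c.Nodup →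
    (∀ a ∈ c, a.IsStandard ∧ nf a = a) → nf (xorOf c) = xorOf c
  | [], _, _, _ => by simp [xorOf, Term.zero, nf]
  | [a], _, _, h => by simpa [xorOf] using (h a (by simp)).2
  | a :: b :: tl, hs, hn, h => by
    show nf (.xor (a :: b :: tl)) = _
    rw [nf_xor_eq (fun u hu => (h u hu).1) (fun u hu => (h u hu).2), nfX,
      sortT_of_sorted hs, cancel_eq_self hs hn]

theorem nf_nf : ∀ t : Term, nf (nf t) = nf t
  | .var x => by simp [nf]
  | .name a => by simp [nf]
  | .pk u => by rw [nf, nf, nf_nf u]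
  | .pair u v => by rw [nf, nf, nf_nf u, nf_nf v]
  | .senc u v => by rw [nf, nf, nf_nf u, nf_nf v]
  | .aenc u v => by rw [nf, nf, nf_nf u, nf_nf v]
  | .xor M => by
    have hstd : ∀ u ∈ facL (Term.xor M), nf (nf u) = nf u := fun u hu => nf_nf u
    rw [nf_xor]
    have h : ∀ a ∈ cancel (sortT ((facL (Term.xor M)).map nf)),
        a.IsStandard ∧ nf a = a := by
      intro a ha
      obtain ⟨u, hu, rfl⟩ := List.mem_map.1 (mem_of_mem_cancel_sortT ha)
      exact ⟨nf_isStandard (isStandard_of_mem_facL _ u hu), hstd u hu⟩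
    rw [nfX]
    exact nf_xorOf
      (List.Pairwise.sublist (cancel_sublist _) (sortT_sorted _))
      (nodup_cancel (sortT_sorted _)) h
decreasing_by
  all_goals first
  | (exact sizeOf_lt_of_mem_facL_xor M u hu)
  | (simp only [Term.pk.sizeOf_spec, Term.pair.sizeOf_spec, Term.senc.sizeOf_spec,
      Term.aenc.sizeOf_spec]; omega)

theorem count_cancel_sortT (l : List Term) (a : Term) :
    (cancel (sortT l)).count a = l.count a % 2 := by
  obtain ⟨q, hq⟩ := cancel_multiset (sortT l)
  have hc := congrArg (Multiset.count a) hq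
  simp only [Multiset.coe_count, Multiset.count_add] at hc
  have h1 : (cancel (sortT l)).count a ≤ 1 :=
    List.nodup_iff_count_le_one.1 (nodup_cancel (sortT_sorted l)) a
  have hperm : (sortT l).count a = l.count a := (sortT_perm l).count_eq a
  omega

instance : IsAntisymm Term leT :=
  ⟨fun a b hab hba => encode_inj a b (le_antisymm hab hba)⟩

theorem nfX_congr {l l' : List Term}
    (h : ∀ a : Term, l.count a % 2 = l'.count a % 2) : nfX l = nfX l' := by
  have hp : List.Perm (cancel (sortT l)) (cancel (sortT l')) :=
    List.perm_iff_count.2 fun a => by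
      rw [count_cancel_sortT, count_cancel_sortT, h]
  rw [nfX, nfX, List.Perm.eq_of_pairwise (le := leT)
    (fun a b _ _ h1 h2 => encode_inj a b (le_antisymm h1 h2))
    (List.Pairwise.sublist (cancel_sublist _) (sortT_sorted _))
    (List.Pairwise.sublist (cancel_sublist _) (sortT_sorted _)) hp]

theorem count_map_parity (f : Term → Term) (l : List Term) (a : Term) :
    ((cancel (sortT l)).map f).count a % 2 = (l.map f).count a % 2 := by
  obtain ⟨q, hq⟩ := cancel_multiset (sortT l)
  have hl : (l : Multiset Term) = ↑(cancel (sortT l)) + ↑q + ↑q := by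
    rw [← hq]
    exact (Multiset.coe_eq_coe.2 (sortT_perm l)).symm
  have hc := congrArg (fun s : Multiset Term => Multiset.count a (Multiset.map f s)) hl
  simp only [Multiset.map_coe, Multiset.map_add, Multiset.count_add,
    Multiset.coe_count] at hc
  omega

theorem zap_isStandard (T : Set Term) : ∀ {t : Term}, t.IsStandard → (zap T t).IsStandard
  | .var x, _ => by rw [zap]; trivial
  | .name a, _ => by rw [zap]; trivial
  | .pk u, _ => by rw [zap]; split <;> first | exact nf_isStandard trivial | trivial
  | .pair u v, _ => by rw [zap]; split <;> first | exact nf_isStandard trivial | trivial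
  | .senc u v, _ => by rw [zap]; split <;> first | exact nf_isStandard trivial | trivial
  | .aenc u v, _ => by rw [zap]; split <;> first | exact nf_isStandard trivial | trivial
  | .xor M, h => h.elim

theorem nf_zero : nf Term.zero = Term.zero := by rw [Term.zero, nf]

theorem zap_normalized (T : Set Term) : ∀ t : Term, nf (zap T t) = zap T t
  | .var x => by rw [zap, nf]
  | .name a => by rw [zap, nf]
  | .pk u => by rw [zap]; split <;> first | exact nf_nf _ | exact nf_zero
  | .pair u v => by rw [zap]; split <;> first | exact nf_nf _ | exact nf_zero
  | .senc u v => by rw [zap]; split <;> first | exact nf_nf _ | exact nf_zero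
  | .aenc u v => by rw [zap]; split <;> first | exact nf_nf _ | exact nf_zero
  | .xor M => by rw [zap]; exact nf_nf _

theorem zap_xorOf (T : Set Term) : ∀ {L : List Term}, (∀ u ∈ L, u.IsStandard) →
    zap T (xorOf L) = nfX (L.map (zap T))
  | [], _ => by
    show zap T Term.zero = _
    rw [Term.zero, zap, nfX]
    simp [sortT, cancel, xorOf, Term.zero]
  | [a], h => by
    show zap T a = nfX [zap T a]
    rw [nfX]
    simp only [sortT, List.mergeSort_singleton]
    rw [cancel]
    rfl
  | a :: b :: L, h => by
    show zap T (.xor (a :: b :: L)) = _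
    rw [zap, List.attach_map_val]
    refine nf_xor_eq ?_ ?_
    · intro u hu
      obtain ⟨v, hv, rfl⟩ := List.mem_map.1 hu
      exact zap_isStandard T (h v hv)
    · intro u hu
      obtain ⟨v, hv, rfl⟩ := List.mem_map.1 hu
      exact zap_normalized T v

/-- **Corollary, part 2.** In the fixed setting of a protocol run
(with its sets `C`, `D` and run substitution `σ`, so that zap is taken relative
to `nf(Dσ)`): for any multiset `{t_1, …, t_n}` of standard normalized ground
terms, `zap(nf(t_1 ⊕ ⋯ ⊕ t_n)) = nf(zap(t_1) ⊕ ⋯ ⊕ zap(t_n))`. -/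
theorem zap_nf_xor (P : Protocol) (hP : P.WF)
    (S : List (Role × (ℕ → Term))) (ξ : List (Term × Term)) (σ : ℕ → Term)
    (hrun : IsRun P S ξ σ)
    (ts : List Term)
    (hts : ∀ u ∈ ts, u.IsStandard ∧ nf u = u ∧ Ground u) :
    zap (TypedSet P S ξ σ) (nf (.xor ts)) =
      nf (.xor (ts.map (zap (TypedSet P S ξ σ)))) := by
  set T := TypedSet P S ξ σ
  rw [nf_xor_eq (fun u hu => (hts u hu).1) (fun u hu => (hts u hu).2.1)]
  rw [nf_xor_eq (l := ts.map (zap T))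
    (fun u hu => by
      obtain ⟨v, hv, rfl⟩ := List.mem_map.1 hu
      exact zap_isStandard T (hts v hv).1)
    (fun u hu => by
      obtain ⟨v, hv, rfl⟩ := List.mem_map.1 hu
      exact zap_normalized T v)]
  rw [nfX, zap_xorOf T (fun u hu => (hts u (mem_of_mem_cancel_sortT hu)).1)]
  exact nfX_congr fun a => count_map_parity (zap T) ts a

end DYXor
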